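/- If 𝓛 is a geometric lattice, then the family of NBB sets of atoms (over all linear orders on the atoms) equals the family of independent sets of the matroid whose lattice of flats is 𝓛. -/

import Mathlib

variable {L : Type*} [Lattice L] [BoundedOrder L] [Fintype L] [DecidableEq L]

/-- The set `D` of atoms is bounded below (BB) with respect to the strict order `ω`
on the atoms: `D` is nonempty and some atom `a` is a strict `ω`-lower bound of every
element of `D` with `a ≤ ⋁ D`. -/
def BddBel (ω : {a : L // IsAtom a} → {a : L // IsAtom a} → Prop)
    (D : Finset {a : L // IsAtom a}) : Prop :=
  D.Nonempty ∧ ∃ a : {a : L // IsAtom a}, (∀ d ∈ D, ω a d) ∧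
    (a : L) ≤ D.sup (Subtype.val)

/-- `B` is NBB with respect to `ω` if it contains no bounded below subset. -/
def IsNBB (ω : {a : L // IsAtom a} → {a : L // IsAtom a} → Prop)
    (B : Finset {a : L // IsAtom a}) : Prop :=
  ∀ D ⊆ B, ¬ BddBel ω D

/-- A set of atoms is independent if it is NBB for some linear (strict total) order
on the atoms. -/
def IndepSet (B : Finset {a : L // IsAtom a}) : Prop :=
  ∃ ω : {a : L // IsAtom a} → {a : L // IsAtom a} → Prop,
    IsStrictTotalOrder _ ω ∧ IsNBB ω B

/-- `r` is the rank function of the graded lattice `L`. -/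
def IsRankFn (r : L → ℕ) : Prop :=
  r ⊥ = 0 ∧ ∀ a b : L, a ⋖ b → r b = r a + 1

/-- `L` is atomistic: every element is a join of atoms. -/
def AtomisticL (L : Type*) [Lattice L] [BoundedOrder L] [DecidableEq L] : Prop :=
  ∀ x : L, ∃ S : Finset {a : L // IsAtom a}, x = S.sup Subtype.val
section Aux

open Classical in
/-- In a finite order, below any strict inequality there is a covering pair at the top. -/
lemma exists_le_covby {x y : L} (h : x < y) : ∃ z, x ≤ z ∧ z ⋖ y := by
  classical
  obtain ⟨z, hz, hmax⟩ := (Finset.univ.filter (fun z => x ≤ z ∧ z < y)).exists_maximal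
    ⟨x, by simp [h]⟩
  simp only [Finset.mem_filter, Finset.mem_univ, true_and] at hz hmax
  refine ⟨z, hz.1, hz.2, fun w hzw hwy => ?_⟩
  exact absurd (hmax ⟨hz.1.trans hzw.le, hwy⟩ hzw.le) (not_le_of_gt hzw)

lemma rank_strictMono (r : L → ℕ) (hr : IsRankFn r) : StrictMono r := by
  intro x y h
  induction y using WellFoundedLT.induction with
  | ind y ih =>
    obtain ⟨z, hxz, hzy⟩ := exists_le_covby h
    rw [hr.2 z y hzy]
    rcases eq_or_lt_of_le hxz with rfl | hlt
    · omega
    · have := ih z hzy.1 hlt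
      omega

lemma rank_mono (r : L → ℕ) (hr : IsRankFn r) : Monotone r :=
  (rank_strictMono r hr).monotone

lemma rank_atom (r : L → ℕ) (hr : IsRankFn r) {a : L} (ha : IsAtom a) : r a = 1 := by
  have h0 := hr.1
  have := hr.2 ⊥ a ha.bot_covBy
  omega

lemma rank_sup_atom_le (r : L → ℕ) (hr : IsRankFn r)
    (hsub : ∀ x y : L, r (x ⊓ y) + r (x ⊔ y) ≤ r x + r y)
    {a : L} (ha : IsAtom a) (x : L) : r (x ⊔ a) ≤ r x + 1 := by
  have h := hsub x a
  rw [rank_atom r hr ha] at h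
  omega

lemma rank_sup_le_card (r : L → ℕ) (hr : IsRankFn r)
    (hsub : ∀ x y : L, r (x ⊓ y) + r (x ⊔ y) ≤ r x + r y)
    (s : Finset {a : L // IsAtom a}) (x : L) :
    r (x ⊔ s.sup Subtype.val) ≤ r x + s.card := by
  classical
  induction s using Finset.induction_on with
  | empty => simp
  | @insert a s ha ih =>
    rw [Finset.sup_insert, Finset.card_insert_of_notMem ha]
    have h1 : r (x ⊔ (↑a ⊔ s.sup Subtype.val)) = r ((x ⊔ s.sup Subtype.val) ⊔ ↑a) := by
      rw [sup_comm (a : L), ← sup_assoc]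
    rw [h1]
    have := rank_sup_atom_le r hr hsub a.2 (x ⊔ s.sup Subtype.val)
    omega

lemma rank_supval_le_card (r : L → ℕ) (hr : IsRankFn r)
    (hsub : ∀ x y : L, r (x ⊓ y) + r (x ⊔ y) ≤ r x + r y)
    (s : Finset {a : L // IsAtom a}) : r (s.sup Subtype.val) ≤ s.card := by
  have h0 := hr.1
  have := rank_sup_le_card r hr hsub s ⊥
  rw [bot_sup_eq] at this
  omega

lemma subset_indep (r : L → ℕ) (hr : IsRankFn r)
    (hsub : ∀ x y : L, r (x ⊓ y) + r (x ⊔ y) ≤ r x + r y)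
    {I J : Finset {a : L // IsAtom a}} (hJI : J ⊆ I)
    (hI : r (I.sup Subtype.val) = I.card) : r (J.sup Subtype.val) = J.card := by
  classical
  have hsupI : I.sup Subtype.val = J.sup Subtype.val ⊔ (I \ J).sup Subtype.val := by
    rw [← Finset.sup_union, Finset.union_sdiff_of_subset hJI]
  have h1 : r (I.sup Subtype.val) ≤ r (J.sup Subtype.val) + (I \ J).card := by
    rw [hsupI]; exact rank_sup_le_card r hr hsub _ _
  have h2 : (I \ J).card + J.card = I.card := Finset.card_sdiff_add_card_eq_card hJI
  have h3 := rank_supval_le_card r hr hsub J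
  omega

end Aux

/-- If `L` is a geometric lattice (finite, atomistic, graded with
submodular rank function), then the NBB sets of atoms (over all linear orders on the
atoms) are exactly the independent sets of the matroid corresponding to `L`, i.e.
the sets of atoms `I` with `rank(⋁ I) = |I|`. -/
theorem geometric_nbb_eq_indep (r : L → ℕ) (hr : IsRankFn r) (hatom : AtomisticL L)
    (hsub : ∀ x y : L, r (x ⊓ y) + r (x ⊔ y) ≤ r x + r y)
    (I : Finset {a : L // IsAtom a}) :
    IndepSet I ↔ r (I.sup Subtype.val) = I.card := by
  classical
  constructor
  · rintro ⟨ω, hω, hnbb⟩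
    by_contra hne
    have hlt : r (I.sup Subtype.val) < I.card :=
      lt_of_le_of_ne (rank_supval_le_card r hr hsub I) hne
    -- take a dependent subset of minimal cardinality
    set S : Finset (Finset {a : L // IsAtom a}) :=
      I.powerset.filter (fun C => r (C.sup Subtype.val) < C.card) with hS
    have hSne : S.Nonempty := ⟨I, by simp [hS, hlt]⟩
    obtain ⟨C, hCS, hCmin⟩ := S.exists_min_image Finset.card hSne
    simp only [hS, Finset.mem_filter, Finset.mem_powerset] at hCS
    obtain ⟨hCI, hCdep⟩ := hCS
    -- C is nonempty, in fact has at least two elements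
    have hCne : C.Nonempty := by
      rcases C.eq_empty_or_nonempty with rfl | h
      · simp [hr.1] at hCdep
      · exact h
    have hC2 : 2 ≤ C.card := by
      by_contra h
      have h1 : C.card = 1 := by
        have := Finset.card_pos.mpr hCne; omega
      obtain ⟨a, rfl⟩ := Finset.card_eq_one.mp h1
      simp [rank_atom r hr a.2] at hCdep
    -- ω-minimum of C
    haveI := hω
    letI : DecidableRel ω := Classical.decRel ω
    letI : LinearOrder {a : L // IsAtom a} := linearOrderOfSTO ω
    obtain ⟨a, haC, hamin⟩ := C.exists_min_image id hCne
    set D := C.erase a with hD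
    have hDC : D ⊆ C := Finset.erase_subset a C
    have hDcard : D.card + 1 = C.card := Finset.card_erase_add_one haC
    have hDne : D.Nonempty := Finset.card_pos.mp (by omega)
    -- D is independent by minimality of C
    have hDindep : r (D.sup Subtype.val) = D.card := by
      refine le_antisymm (rank_supval_le_card r hr hsub D) ?_
      by_contra h
      have hDS : D ∈ S := by
        simp only [hS, Finset.mem_filter, Finset.mem_powerset]
        exact ⟨hDC.trans hCI, by omega⟩
      have := hCmin D hDS
      omega
    -- sup D = sup C
    have hle : D.sup Subtype.val ≤ C.sup Subtype.val := Finset.sup_mono hDC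
    have hrle : r (C.sup Subtype.val) ≤ r (D.sup Subtype.val) := by omega
    have hsupeq : D.sup Subtype.val = C.sup Subtype.val := by
      rcases eq_or_lt_of_le hle with h | h
      · exact h
      · exact absurd (rank_strictMono r hr h) (by omega)
    -- D is bounded below with witness a
    refine hnbb D (hDC.trans hCI) ⟨hDne, a, ?_, ?_⟩
    · intro d hd
      have hda : d ≠ a := Finset.ne_of_mem_erase hd
      have := hamin d (hDC hd)
      rcases this with h | h
      · exact absurd h.symm hda
      · exact h
    · rw [hsupeq]
      exact Finset.le_sup haC
  · intro hI
    letI : Fintype {a : L // IsAtom a} := Fintype.ofFinite _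
    let e := Fintype.equivFin {a : L // IsAtom a}
    let n := Fintype.card {a : L // IsAtom a}
    let f : {a : L // IsAtom a} → ℕ := fun a => if a ∈ I then (e a : ℕ) else n + (e a : ℕ)
    have hfinj : Function.Injective f := by
      intro a b hab
      simp only [f] at hab
      have hea : (e a : ℕ) < n := (e a).2
      have heb : (e b : ℕ) < n := (e b).2
      have : (e a : ℕ) = (e b : ℕ) := by
        split_ifs at hab <;> omega
      exact e.injective (Fin.val_injective this)
    refine ⟨fun a b => f a < f b, ?_, ?_⟩
    · letI : IsTrichotomous _ (fun a b => f a < f b) := ⟨fun a b h1 h2 =>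
        hfinj (le_antisymm (not_lt.mp h2) (not_lt.mp h1))⟩
      letI : IsIrrefl _ (fun a b => f a < f b) := ⟨fun a => lt_irrefl _⟩
      letI : IsTrans _ (fun a b => f a < f b) := ⟨fun a b c => Nat.lt_trans⟩
      letI : IsStrictOrder _ (fun a b => f a < f b) := {}
      exact {}
    · rintro D hDI ⟨hDne, a, hlt, hle⟩
      obtain ⟨d, hd⟩ := hDne
      have hdI : d ∈ I := hDI hd
      have hfa : f a < n := by
        have := hlt d hd
        have : f a < f d := this
        simp only [f, if_pos hdI] at this
        exact lt_of_lt_of_le this (le_of_lt (e d).2)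
      have haI : a ∈ I := by
        by_contra h
        simp only [f, if_neg h] at hfa
        omega
      have haD : a ∉ D := fun h => lt_irrefl _ (hlt a h)
      have hsub' : insert a D ⊆ I := Finset.insert_subset haI hDI
      have h1 : r ((insert a D).sup Subtype.val) = (insert a D).card :=
        subset_indep r hr hsub hsub' hI
      have h2 : r (D.sup Subtype.val) = D.card := subset_indep r hr hsub hDI hI
      rw [Finset.sup_insert, sup_eq_right.mpr hle,
        Finset.card_insert_of_notMem haD] at h1
      omega
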